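/- For every A > 0, T_crit(A) := sup{𝒯_H : H ∈ 𝒜_crit(A)} is finite. Moreover, lim sup_{A→0⁺} log(T_crit(A)) · A^{p−1} < ∞; equivalently, there exist A₀ > 0 and C > 0 such that for all A ∈ (0, A₀), every H ∈ 𝒜_crit(A) defined on [0, 𝒯_H) satisfies log(𝒯_H) ≤ C A^{−(p−1)}. -/

import Mathlib

open Set

/-- One-sided first derivative on `[0, ∞)`. -/
noncomputable def Hd (H : ℝ → ℝ) : ℝ → ℝ := derivWithin H (Set.Ici 0)

/-- One-sided second derivative on `[0, ∞)`. -/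
noncomputable def Hdd (H : ℝ → ℝ) : ℝ → ℝ := derivWithin (Hd H) (Set.Ici 0)

/-- `H ∈ 𝒜_crit(A)` with (possibly infinite) existence time `S = 𝒯_H`:
`H` is `C²` on `[0, S)`, `H(0) = H'(0) = 0`, `H''(t) ≥ A (t+1)⁻¹` on `[0, S)`, and
`H''(t) ≥ (t+1)^{-(p+1)} (log (t+1))^{-(p-1)} H(t)^p` on `[T₀, S)`. -/
def MemAcrit (p T₀ A : ℝ) (H : ℝ → ℝ) (S : EReal) : Prop :=
  0 < S ∧
  ContDiffOn ℝ 2 H {t : ℝ | 0 ≤ t ∧ (t : EReal) < S} ∧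
  H 0 = 0 ∧ Hd H 0 = 0 ∧
  (∀ t : ℝ, 0 ≤ t → (t : EReal) < S → A * (t + 1)⁻¹ ≤ Hdd H t) ∧
  (∀ t : ℝ, T₀ ≤ t → (t : EReal) < S →
    (t + 1) ^ (-(p + 1)) * Real.log (t + 1) ^ (-(p - 1)) * H t ^ p ≤ Hdd H t)

/- ### Auxiliary material -/

lemma comp_deriv {f g : ℝ → ℝ} {a b : ℝ} (hab : a ≤ b)
    (hf : ContinuousOn f (Icc a b)) (hg : ContinuousOn g (Icc a b))
    (hfd : ∀ t ∈ Ioo a b, DifferentiableAt ℝ f t)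
    (hgd : ∀ t ∈ Ioo a b, DifferentiableAt ℝ g t)
    (hle : ∀ t ∈ Ioo a b, deriv g t ≤ deriv f t) :
    g b - g a ≤ f b - f a := by
  have hmono : MonotoneOn (fun t => f t - g t) (Icc a b) := by
    apply monotoneOn_of_deriv_nonneg (convex_Icc a b) (hf.sub hg)
    · intro t ht
      rw [interior_Icc] at ht
      exact ((hfd t ht).sub (hgd t ht)).differentiableWithinAt
    · intro t ht
      rw [interior_Icc] at ht
      rw [deriv_sub (hfd t ht) (hgd t ht)]
      linarith [hle t ht]
  have h2 := hmono (left_mem_Icc.2 hab) (right_mem_Icc.2 hab) hab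
  simp only at h2
  linarith

lemma mono_deriv {f : ℝ → ℝ} {a b : ℝ}
    (hf : ContinuousOn f (Icc a b))
    (hfd : ∀ t ∈ Ioo a b, DifferentiableAt ℝ f t)
    (h0 : ∀ t ∈ Ioo a b, 0 ≤ deriv f t) : MonotoneOn f (Icc a b) := by
  apply monotoneOn_of_deriv_nonneg (convex_Icc a b) hf
  · intro t ht; rw [interior_Icc] at ht; exact (hfd t ht).differentiableWithinAt
  · intro t ht; rw [interior_Icc] at ht; exact h0 t ht

lemma dlog1 (u : ℝ) (h : 0 < u + 1) :
    HasDerivAt (fun x : ℝ => Real.log (x + 1)) (u + 1)⁻¹ u := by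
  exact ((Real.hasDerivAt_log h.ne').comp u ((hasDerivAt_id u).add_const 1)).congr_deriv (by simp : (u + 1)⁻¹ * 1 = (u + 1)⁻¹)

/-- The constant in the smallness condition on `log s₀`. -/
noncomputable def Cp (p : ℝ) : ℝ :=
  2 * Real.log 2 + Real.log 16 / (p - 1) + Real.log 4 / (p - 1) ^ 2

/-- The iterated lower bounds `μ i` for `H(τ i)/(τ i + 1)`. -/
noncomputable def muSeq (p A s₀ : ℝ) : ℕ → ℝ
  | 0 => A * s₀ / 2
  | (i+1) => (muSeq p A s₀ i) ^ p *
      ((2*s₀) ^ (-(p-1)) * (s₀ * (2⁻¹:ℝ)^(i+2))^2 / (1 + s₀ * (2⁻¹:ℝ)^(i+2)))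

lemma muSeq_zero (p A s₀ : ℝ) : muSeq p A s₀ 0 = A * s₀ / 2 := rfl

lemma muSeq_succ (p A s₀ : ℝ) (i : ℕ) : muSeq p A s₀ (i+1) = (muSeq p A s₀ i) ^ p *
    ((2*s₀) ^ (-(p-1)) * (s₀ * (2⁻¹:ℝ)^(i+2))^2 / (1 + s₀ * (2⁻¹:ℝ)^(i+2))) := rfl

set_option maxHeartbeats 2000000 in
/-- The key quantitative lemma. -/
lemma crit_key (p T₀ A : ℝ) (hp : 1 < p) (hT₀ : 0 < T₀) (hA : 0 < A)
    (s₀ : ℝ) (hs₀2 : 2 ≤ s₀) (hs₀T : Real.log (T₀ + 1) ≤ s₀)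
    (hgrow : Cp p + 1 ≤ Real.log A + Real.log s₀ / (p - 1))
    (H : ℝ → ℝ) (S : EReal) (hmem : MemAcrit p T₀ A H S) :
    S ≤ ((Real.exp (2 * s₀) : ℝ) : EReal) := by
  obtain ⟨hS0, hC, hH0, hHd0, hyp2, hyp3⟩ := hmem
  set D : Set ℝ := {t : ℝ | 0 ≤ t ∧ (t : EReal) < S} with hDdef
  by_contra hcon
  have hMS : ((Real.exp (2 * s₀) : ℝ) : EReal) < S := not_le.mp hcon
  set M : ℝ := Real.exp (2 * s₀) with hMdef
  set b : ℝ := M - 1 with hbdef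
  have hp1 : (0:ℝ) < p - 1 := by linarith
  have hs₀pos : (0:ℝ) < s₀ := by linarith
  have hM1 : (1:ℝ) < M := by
    rw [hMdef, show (1:ℝ) = Real.exp 0 by simp]
    exact Real.exp_lt_exp.2 (by linarith)
  have hb0 : (0:ℝ) ≤ b := by rw [hbdef]; linarith
  have hDsub : ∀ {t : ℝ}, 0 ≤ t → t < M → t ∈ D := by
    intro t h1 h2
    exact ⟨h1, lt_trans (EReal.coe_lt_coe_iff.2 h2) hMS⟩
  have hinD : ∀ t ∈ Icc (0:ℝ) b, t ∈ D := fun t ht => hDsub ht.1 (by linarith [ht.2])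
  have hIoosub : Ioo (0:ℝ) M ⊆ D := fun t ht => hDsub ht.1.le ht.2
  have h2' : ∀ t : ℝ, 0 ≤ t → t < M → A * (t + 1)⁻¹ ≤ Hdd H t := fun t h1 h2 =>
    hyp2 t h1 (hDsub h1 h2).2
  have h3' : ∀ t : ℝ, T₀ ≤ t → t < M →
      (t + 1) ^ (-(p + 1)) * Real.log (t + 1) ^ (-(p - 1)) * H t ^ p ≤ Hdd H t := fun t h1 h2 =>
    hyp3 t h1 (hDsub (by linarith) h2).2
  -- derivative infrastructure
  have hopen : IsOpen (Ioo (0:ℝ) M) := isOpen_Ioo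
  have hC2 : ContDiffOn ℝ 2 H (Ioo 0 M) := hC.mono hIoosub
  have hHdiffAt : ∀ t ∈ Ioo (0:ℝ) M, DifferentiableAt ℝ H t := fun t ht =>
    (hC2.contDiffAt (hopen.mem_nhds ht)).differentiableAt (by norm_num)
  have hC1d : ContDiffOn ℝ 1 (deriv H) (Ioo 0 M) := hC2.deriv_of_isOpen hopen (by norm_num)
  have hdHdiffAt : ∀ t ∈ Ioo (0:ℝ) M, DifferentiableAt ℝ (deriv H) t := fun t ht =>
    (hC1d.contDiffAt (hopen.mem_nhds ht)).differentiableAt (by norm_num)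
  have hHdeq : ∀ t : ℝ, 0 < t → Hd H t = deriv H t := fun t ht =>
    derivWithin_of_mem_nhds (Ici_mem_nhds ht)
  have hHdev : ∀ t ∈ Ioo (0:ℝ) M, Hd H =ᶠ[nhds t] deriv H := by
    intro t ht
    filter_upwards [Ioi_mem_nhds ht.1] with u hu using hHdeq u hu
  have hHd_diffAt : ∀ t ∈ Ioo (0:ℝ) M, DifferentiableAt ℝ (Hd H) t := fun t ht =>
    ((hHdev t ht).differentiableAt_iff).2 (hdHdiffAt t ht)
  have hHdd_deriv : ∀ t ∈ Ioo (0:ℝ) M, deriv (Hd H) t = Hdd H t := by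
    intro t ht
    exact (derivWithin_of_mem_nhds (Ici_mem_nhds ht.1)).symm
  -- continuity of Hd on [0, b]
  have hDcases : D = Ici (0:ℝ) ∨ ∃ s : ℝ, M < s ∧ D = Ico 0 s := by
    induction S with
    | bot => exact absurd hS0 (by simp)
    | coe s =>
      refine Or.inr ⟨s, EReal.coe_lt_coe_iff.1 hMS, ?_⟩
      ext t; simp [hDdef, EReal.coe_lt_coe_iff]
    | top =>
      refine Or.inl ?_
      ext t; simp [hDdef]
  have hUD : UniqueDiffOn ℝ D := by
    rcases hDcases with h | ⟨s, _, h⟩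
    · rw [h]; exact uniqueDiffOn_Ici 0
    · rw [h]; exact uniqueDiffOn_Ico 0 s
  have hDcont : ContinuousOn (derivWithin H D) D :=
    hC.continuousOn_derivWithin hUD (by norm_num)
  have hD0ev : D =ᶠ[nhds (0:ℝ)] Ici (0:ℝ) := by
    rcases hDcases with h | ⟨s, hMs, h⟩
    · rw [h]; exact Filter.EventuallyEq.rfl
    · rw [h]
      apply Filter.eventuallyEq_set.2
      filter_upwards [Iio_mem_nhds (show (0:ℝ) < s by linarith)] with u hu
      simp only [mem_Ico, mem_Ici]
      exact ⟨fun h => h.1, fun h => ⟨h, hu⟩⟩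
  have hHdEqD : Set.EqOn (Hd H) (derivWithin H D) (Icc 0 b) := by
    intro t ht
    rcases eq_or_lt_of_le ht.1 with h0 | h0
    · rw [← h0]
      exact (derivWithin_congr_set hD0ev).symm
    · have htM : t ∈ Ioo (0:ℝ) M := ⟨h0, by linarith [ht.2]⟩
      rw [hHdeq t h0]
      exact (derivWithin_of_mem_nhds (Filter.mem_of_superset (hopen.mem_nhds htM) hIoosub)).symm
  have hHdcont : ContinuousOn (Hd H) (Icc 0 b) := (hDcont.mono hinD).congr hHdEqD
  have hHcont : ContinuousOn H (Icc 0 b) := hC.continuousOn.mono hinD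
  -- generic comparison helpers
  have helper1 : ∀ (g g' : ℝ → ℝ) (u v : ℝ), 0 ≤ u → u ≤ v → v ≤ b →
      (∀ t ∈ Icc u v, HasDerivAt g (g' t) t) →
      (∀ t ∈ Ioo u v, g' t ≤ Hdd H t) →
      g v - g u ≤ Hd H v - Hd H u := by
    intro g g' u v hu huv hvb hgd hle
    have hIoo : Ioo u v ⊆ Ioo 0 M := fun t ht =>
      ⟨lt_of_le_of_lt hu ht.1, by linarith [ht.2]⟩
    apply comp_deriv huv (hHdcont.mono (Icc_subset_Icc hu hvb))
      (fun t ht => (hgd t ht).continuousAt.continuousWithinAt)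
      (fun t ht => hHd_diffAt t (hIoo ht))
      (fun t ht => (hgd t (Ioo_subset_Icc_self ht)).differentiableAt)
    intro t ht
    rw [(hgd t (Ioo_subset_Icc_self ht)).deriv, hHdd_deriv t (hIoo ht)]
    exact hle t ht
  have helper2 : ∀ (g g' : ℝ → ℝ) (u v : ℝ), 0 ≤ u → u ≤ v → v ≤ b →
      (∀ t ∈ Icc u v, HasDerivAt g (g' t) t) →
      (∀ t ∈ Ioo u v, g' t ≤ Hd H t) →
      g v - g u ≤ H v - H u := by
    intro g g' u v hu huv hvb hgd hle
    have hIoo : Ioo u v ⊆ Ioo 0 M := fun t ht =>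
      ⟨lt_of_le_of_lt hu ht.1, by linarith [ht.2]⟩
    apply comp_deriv huv (hHcont.mono (Icc_subset_Icc hu hvb))
      (fun t ht => (hgd t ht).continuousAt.continuousWithinAt)
      (fun t ht => hHdiffAt t (hIoo ht))
      (fun t ht => (hgd t (Ioo_subset_Icc_self ht)).differentiableAt)
    intro t ht
    rw [(hgd t (Ioo_subset_Icc_self ht)).deriv, ← hHdeq t (hIoo ht).1]
    exact hle t ht
  -- F1 : A log(t+1) ≤ Hd H t on [0,b]
  have F1 : ∀ t ∈ Icc (0:ℝ) b, A * Real.log (t + 1) ≤ Hd H t := by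
    intro t ht
    rcases eq_or_lt_of_le ht.1 with h0 | h0
    · rw [← h0]; simp [hHd0]
    · have key := helper1 (fun u => A * Real.log (u + 1)) (fun u => A * (u + 1)⁻¹)
        0 t le_rfl h0.le ht.2
        (fun u hu => (dlog1 u (by linarith [hu.1])).const_mul A)
        (fun u hu => h2' u hu.1.le (by linarith [hu.2, ht.2]))
      rw [hHd0] at key
      simp only [zero_add, Real.log_one, mul_zero, sub_zero] at key
      linarith
  have hHdnn : ∀ t ∈ Icc (0:ℝ) b, 0 ≤ Hd H t := fun t ht =>
    le_trans (mul_nonneg hA.le (Real.log_nonneg (by linarith [ht.1]))) (F1 t ht)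
  -- F3 : Hd H monotone on [0,b]
  have F3 : MonotoneOn (Hd H) (Icc 0 b) := by
    apply mono_deriv hHdcont
    · intro t ht; exact hHd_diffAt t ⟨ht.1, by linarith [ht.2]⟩
    · intro t ht
      rw [hHdd_deriv t ⟨ht.1, by linarith [ht.2]⟩]
      have h1 := h2' t ht.1.le (by linarith [ht.2])
      have hpos : (0:ℝ) < (t+1)⁻¹ := inv_pos.2 (by linarith [ht.1])
      nlinarith [mul_pos hA hpos]
  -- F2 : A((t+1)log(t+1) - t) ≤ H t on [0,b]
  have F2 : ∀ t ∈ Icc (0:ℝ) b, A * ((t + 1) * Real.log (t + 1) - t) ≤ H t := by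
    intro t ht
    rcases eq_or_lt_of_le ht.1 with h0 | h0
    · rw [← h0]; simp [hH0]
    · have key := helper2 (fun u => A * ((u + 1) * Real.log (u + 1) - u))
        (fun u => A * Real.log (u + 1)) 0 t le_rfl h0.le ht.2 ?_
        (fun u hu => F1 u ⟨hu.1.le, by linarith [hu.2, ht.2]⟩)
      · rw [hH0] at key
        simp only [zero_add, Real.log_one, mul_zero, one_mul, sub_zero, mul_one] at key
        norm_num at key
        linarith
      · intro u hu
        have h1 : HasDerivAt (fun x : ℝ => x + 1) 1 u := (hasDerivAt_id' u).add_const 1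
        have h2 : HasDerivAt (fun x : ℝ => Real.log (x + 1)) (u + 1)⁻¹ u :=
          dlog1 u (by linarith [hu.1])
        have h3 := (h1.mul h2).sub (hasDerivAt_id' u)
        have heq : 1 * Real.log (u + 1) + (u + 1) * (u + 1)⁻¹ - 1 = Real.log (u + 1) := by
          rw [mul_inv_cancel₀ (by linarith [hu.1] : (u:ℝ) + 1 ≠ 0)]
          ring
        rw [heq] at h3
        exact h3.const_mul A
  -- F5 : H t ≤ (t+1) Hd H t on [0,b]
  have F5 : ∀ t ∈ Icc (0:ℝ) b, H t ≤ (t + 1) * Hd H t := by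
    intro t ht
    rcases eq_or_lt_of_le ht.1 with h0 | h0
    · rw [← h0]; simp [hH0, hHd0]
    · have key := comp_deriv (f := fun u => (u + 1) * Hd H u) (g := H) h0.le
        (((continuous_id.add continuous_const).continuousOn).mul
          (hHdcont.mono (Icc_subset_Icc_right ht.2)))
        (hHcont.mono (Icc_subset_Icc_right ht.2)) ?_ ?_ ?_
      · rw [hH0, hHd0] at key
        simp only [zero_add, one_mul, mul_zero, sub_zero] at key
        linarith
      · intro u hu
        have huM : u ∈ Ioo (0:ℝ) M := ⟨hu.1, by linarith [hu.2, ht.2]⟩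
        exact (differentiableAt_id.add_const 1).mul (hHd_diffAt u huM)
      · intro u hu
        exact hHdiffAt u ⟨hu.1, by linarith [hu.2, ht.2]⟩
      · intro u hu
        have huM : u ∈ Ioo (0:ℝ) M := ⟨hu.1, by linarith [hu.2, ht.2]⟩
        have hprod := ((hasDerivAt_id' u).add_const 1).mul (hHd_diffAt u huM).hasDerivAt
        rw [show (fun u => (u + 1) * Hd H u) = (fun x => x + 1) * Hd H from rfl, hprod.deriv, hHdd_deriv u huM, ← hHdeq u hu.1]
        have hHddnn : 0 ≤ Hdd H u := by
          have h1 := h2' u hu.1.le huM.2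
          have hpos : (0:ℝ) < (u+1)⁻¹ := inv_pos.2 (by linarith [hu.1])
          nlinarith [mul_pos hA hpos]
        nlinarith [hu.1]
  -- Pmono : H t / (t+1) monotone on [0,b]
  have Pmono : MonotoneOn (fun t => H t / (t + 1)) (Icc 0 b) := by
    apply mono_deriv
    · exact hHcont.div ((continuous_id.add continuous_const).continuousOn)
        (fun t ht => by intro hc; linarith [ht.1])
    · intro t ht
      have htM : t ∈ Ioo (0:ℝ) M := ⟨ht.1, by linarith [ht.2]⟩
      exact (hHdiffAt t htM).div (differentiableAt_id.add_const 1) (by intro hc; linarith [ht.1])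
    · intro t ht
      have htM : t ∈ Ioo (0:ℝ) M := ⟨ht.1, by linarith [ht.2]⟩
      have hq := (hHdiffAt t htM).hasDerivAt.div (((hasDerivAt_id' t)).add_const 1)
        (by intro hc; linarith [ht.1] : t + 1 ≠ 0)
      rw [show (fun t => H t / (t + 1)) = H / (fun x => x + 1) from rfl, hq.deriv]
      have h5 := F5 t ⟨ht.1.le, ht.2.le⟩
      rw [hHdeq t ht.1] at h5
      have hnum : 0 ≤ deriv H t * (t + 1) - H t * 1 := by nlinarith
      have hden : (0:ℝ) < (t + 1)^2 := by nlinarith [ht.1]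
      positivity
  -- F6 : derivative gain on [u,v]
  have F6 : ∀ (u v μ' : ℝ), T₀ ≤ u → 0 < u → u ≤ v → v ≤ b → Real.log (v+1) ≤ 2*s₀ → 0 < μ' →
      (∀ t ∈ Icc u v, μ' * (t+1) ≤ H t) →
      Hd H u + μ'^p * (2*s₀)^(-(p-1)) * (Real.log (v+1) - Real.log (u+1)) ≤ Hd H v := by
    intro u v μ' huT hu0 huv hvb hvlog hμ' hbound
    have key := helper1 (fun t => μ'^p * (2*s₀)^(-(p-1)) * Real.log (t+1))
        (fun t => μ'^p * (2*s₀)^(-(p-1)) * (t+1)⁻¹) u v hu0.le huv hvb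
        (fun t ht => (dlog1 t (by linarith [ht.1])).const_mul _) ?_
    · rw [mul_sub]
      linarith
    · intro t ht
      have htT : T₀ ≤ t := le_trans huT ht.1.le
      have ht0 : 0 < t := lt_trans hu0 ht.1
      have htM : t < M := by linarith [ht.2, hvb]
      have hlog_pos : 0 < Real.log (t+1) := Real.log_pos (by linarith)
      have hlog_le : Real.log (t+1) ≤ 2*s₀ :=
        le_trans (Real.log_le_log (by linarith) (by linarith [ht.2])) hvlog
      have hHt : μ' * (t+1) ≤ H t := hbound t ⟨ht.1.le, ht.2.le⟩
      have c1 : μ'^p * (t+1)^p ≤ H t ^ p := by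
        rw [← Real.mul_rpow hμ'.le (by linarith : (0:ℝ) ≤ t+1)]
        exact Real.rpow_le_rpow (by positivity) hHt (by linarith)
      have c2 : (2*s₀)^(-(p-1)) ≤ Real.log (t+1) ^ (-(p-1)) :=
        Real.rpow_le_rpow_of_nonpos hlog_pos hlog_le (by linarith)
      have c3 : (t+1:ℝ)^(-(p+1)) * (t+1)^p = (t+1)⁻¹ := by
        rw [← Real.rpow_add (by linarith : (0:ℝ) < t+1), show -(p+1)+p = (-1:ℝ) by ring,
          Real.rpow_neg_one]
      have hHdd := h3' t htT htM
      have h1 : (0:ℝ) ≤ (t+1:ℝ)^(-(p+1)) := Real.rpow_nonneg (by linarith) _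
      have h3 : (0:ℝ) ≤ μ'^p * (t+1)^p := by positivity
      have h2 : (0:ℝ) ≤ Real.log (t+1) ^ (-(p-1)) := Real.rpow_nonneg hlog_pos.le _
      calc μ'^p * (2*s₀)^(-(p-1)) * (t+1)⁻¹
          = (t+1)^(-(p+1)) * (2*s₀)^(-(p-1)) * (μ'^p * (t+1)^p) := by rw [← c3]; ring
        _ ≤ (t+1)^(-(p+1)) * Real.log (t+1)^(-(p-1)) * (H t ^ p) :=
            mul_le_mul (mul_le_mul_of_nonneg_left c2 h1) c1 h3 (mul_nonneg h1 h2)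
        _ ≤ Hdd H t := hHdd
  -- F7 : linear lower bound for H
  have F7 : ∀ u v : ℝ, 0 ≤ u → u ≤ v → v ≤ b → H u + (v - u) * Hd H u ≤ H v := by
    intro u v hu huv hvb
    have key := helper2 (fun t => Hd H u * t) (fun _ => Hd H u) u v hu huv hvb
      (fun t _ => by simpa using (hasDerivAt_id' t).const_mul (Hd H u))
      (fun t ht => F3 ⟨hu, le_trans huv hvb⟩ ⟨le_trans hu ht.1.le, le_trans ht.2.le hvb⟩ ht.1.le)
    nlinarith [key]
  -- sequences
  obtain ⟨σf, hσf⟩ : ∃ f : ℕ → ℝ, f = fun i => s₀ * (2 - (2⁻¹:ℝ)^i) := ⟨_, rfl⟩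
  obtain ⟨stp, hstp⟩ : ∃ f : ℕ → ℝ, f = fun i => s₀ * (2⁻¹:ℝ)^(i+2) := ⟨_, rfl⟩
  obtain ⟨τ, hτ⟩ : ∃ f : ℕ → ℝ, f = fun i => Real.exp (σf i) - 1 := ⟨_, rfl⟩
  obtain ⟨τ', hτ'⟩ : ∃ f : ℕ → ℝ, f = fun i => Real.exp (σf i + stp i) - 1 := ⟨_, rfl⟩
  have hstp_pos : ∀ i, 0 < stp i := fun i => by rw [hstp]; positivity
  have hstp_le : ∀ i, stp i ≤ s₀ / 4 := by
    intro i
    rw [hstp]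
    have h1 : ((2:ℝ)⁻¹)^(i+2) ≤ ((2:ℝ)⁻¹)^2 :=
      pow_le_pow_of_le_one (by norm_num) (by norm_num) (by omega)
    calc s₀ * (2⁻¹:ℝ)^(i+2) ≤ s₀ * ((2:ℝ)⁻¹)^2 := mul_le_mul_of_nonneg_left h1 hs₀pos.le
      _ = s₀ / 4 := by rw [show ((2:ℝ)⁻¹)^2 = 1/4 by norm_num]; ring
  have hσsucc : ∀ i, σf (i+1) = σf i + 2 * stp i := by
    intro i
    simp only [hσf, hstp]
    ring
  have hσ_ge : ∀ i, s₀ ≤ σf i := by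
    intro i
    simp only [hσf]
    have h1 : ((2:ℝ)⁻¹)^i ≤ 1 := pow_le_one₀ (by norm_num) (by norm_num)
    nlinarith
  have hσ_lt : ∀ i, σf i < 2*s₀ := by
    intro i
    simp only [hσf]
    have h1 : (0:ℝ) < ((2:ℝ)⁻¹)^i := by positivity
    nlinarith
  have hσ'_lt : ∀ i, σf i + stp i < 2*s₀ := by
    intro i
    have := hσ_lt (i+1)
    have := hσsucc i
    have := hstp_pos i
    linarith
  have hτ_log : ∀ i, Real.log (τ i + 1) = σf i := by
    intro i
    rw [hτ]
    simp only
    rw [show Real.exp (σf i) - 1 + 1 = Real.exp (σf i) by ring, Real.log_exp]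
  have hτ'_log : ∀ i, Real.log (τ' i + 1) = σf i + stp i := by
    intro i
    rw [hτ']
    simp only
    rw [show Real.exp (σf i + stp i) - 1 + 1 = Real.exp (σf i + stp i) by ring, Real.log_exp]
  have hτ_mem : ∀ i, τ i ∈ Icc 0 b := by
    intro i
    constructor
    · rw [hτ]
      simp only
      have h1 : (1:ℝ) ≤ Real.exp (σf i) := by
        rw [show (1:ℝ) = Real.exp 0 by simp]
        exact Real.exp_le_exp.2 (by linarith [hσ_ge i])
      linarith
    · rw [hτ, hbdef, hMdef]
      simp only
      have h1 : Real.exp (σf i) ≤ Real.exp (2*s₀) := Real.exp_le_exp.2 (hσ_lt i).le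
      linarith
  have hτ'_mem : ∀ i, τ' i ∈ Icc 0 b := by
    intro i
    constructor
    · rw [hτ']
      simp only
      have h1 : (1:ℝ) ≤ Real.exp (σf i + stp i) := by
        rw [show (1:ℝ) = Real.exp 0 by simp]
        exact Real.exp_le_exp.2 (by linarith [hσ_ge i, hstp_pos i])
      linarith
    · rw [hτ', hbdef, hMdef]
      simp only
      have h1 : Real.exp (σf i + stp i) ≤ Real.exp (2*s₀) := Real.exp_le_exp.2 (hσ'_lt i).le
      linarith
  have hττ' : ∀ i, τ i ≤ τ' i := by
    intro i
    rw [hτ, hτ']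
    simp only
    have := Real.exp_le_exp.2 (by linarith [hstp_pos i] : σf i ≤ σf i + stp i)
    linarith
  have hτ'τ : ∀ i, τ' i ≤ τ (i+1) := by
    intro i
    rw [hτ, hτ']
    simp only
    have h1 : σf i + stp i ≤ σf (i+1) := by rw [hσsucc i]; linarith [hstp_pos i]
    have := Real.exp_le_exp.2 h1
    linarith
  have hτT₀ : ∀ i, T₀ ≤ τ i := by
    intro i
    rw [hτ]
    simp only
    have h1 : Real.exp (Real.log (T₀+1)) ≤ Real.exp (σf i) :=
      Real.exp_le_exp.2 (le_trans hs₀T (hσ_ge i))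
    rw [Real.exp_log (by linarith : (0:ℝ) < T₀+1)] at h1
    linarith
  have hτpos : ∀ i, 0 < τ i := fun i => lt_of_lt_of_le hT₀ (hτT₀ i)
  -- positivity of μ
  have hμpos : ∀ i, 0 < muSeq p A s₀ i := by
    intro i
    induction i with
    | zero =>
      rw [muSeq_zero]
      positivity
    | succ i ih =>
      rw [muSeq_succ]
      have h1 := Real.rpow_pos_of_pos ih p
      positivity
  -- main induction
  have IND : ∀ i, muSeq p A s₀ i * (τ i + 1) ≤ H (τ i) := by
    intro i
    induction i with
    | zero =>
      have hb2 := F2 (τ 0) (hτ_mem 0)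
      rw [hτ_log 0] at hb2
      have hσ0 : σf 0 = s₀ := by rw [hσf]; norm_num
      rw [hσ0] at hb2
      rw [muSeq_zero]
      have h1 := hτpos 0
      nlinarith [mul_nonneg (mul_nonneg hA.le (by linarith : (0:ℝ) ≤ τ 0 + 1))
        (by linarith : (0:ℝ) ≤ s₀ - 2)]
    | succ i ih =>
      have hbound : ∀ t ∈ Icc (τ i) (τ' i), muSeq p A s₀ i * (t+1) ≤ H t := by
        intro t ht
        have htIcc : t ∈ Icc 0 b := ⟨le_trans (hτ_mem i).1 ht.1, le_trans ht.2 (hτ'_mem i).2⟩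
        have hPm := Pmono (hτ_mem i) htIcc ht.1
        simp only at hPm
        have h1 : (0:ℝ) < τ i + 1 := by linarith [hτpos i]
        have h2 : (0:ℝ) < t + 1 := by linarith [htIcc.1]
        rw [div_le_div_iff₀ h1 h2] at hPm
        nlinarith [ih, hPm, hμpos i]
      have hstep1 := F6 (τ i) (τ' i) (muSeq p A s₀ i) (hτT₀ i) (hτpos i) (hττ' i)
        (hτ'_mem i).2 (by rw [hτ'_log i]; linarith [hσ'_lt i]) (hμpos i) hbound
      rw [hτ_log i, hτ'_log i] at hstep1
      have hsimp : σf i + stp i - σf i = stp i := by ring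
      rw [hsimp] at hstep1
      have hHdτ : 0 ≤ Hd H (τ i) := hHdnn _ (hτ_mem i)
      have hstep1' : muSeq p A s₀ i ^ p * (2*s₀)^(-(p-1)) * stp i ≤ Hd H (τ' i) := by
        linarith
      have hstep2 := F7 (τ' i) (τ (i+1)) (hτ'_mem i).1 (hτ'τ i) (hτ_mem (i+1)).2
      have hHτ' : 0 ≤ H (τ' i) := by
        have := hbound (τ' i) ⟨hττ' i, le_rfl⟩
        nlinarith [hμpos i, (hτ'_mem i).1]
      have hgap : (τ (i+1) + 1) * (stp i / (1 + stp i)) ≤ τ (i+1) - τ' i := by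
        have h1s : 0 < 1 + stp i := by linarith [hstp_pos i]
        have e3 : Real.exp (σf i + stp i) = Real.exp (σf (i+1)) * Real.exp (-stp i) := by
          rw [← Real.exp_add]
          congr 1
          rw [hσsucc i]
          ring
        have e4 : Real.exp (-stp i) ≤ (1 + stp i)⁻¹ := by
          rw [Real.exp_neg]
          exact inv_anti₀ h1s (by linarith [Real.add_one_le_exp (stp i)])
        have hexp_pos : (0:ℝ) < Real.exp (σf (i+1)) := Real.exp_pos _
        have keymul : Real.exp (σf (i+1)) * Real.exp (-stp i) ≤
            Real.exp (σf (i+1)) * (1 + stp i)⁻¹ := mul_le_mul_of_nonneg_left e4 hexp_pos.le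
        have e1 : τ (i+1) + 1 = Real.exp (σf (i+1)) := by rw [hτ]; ring
        have e2 : τ (i+1) - τ' i = Real.exp (σf (i+1)) - Real.exp (σf (i+1)) * Real.exp (-stp i) := by
          rw [hτ, hτ', ← e3]
          ring
        rw [e1, e2]
        have e5 : Real.exp (σf (i+1)) * (stp i / (1 + stp i)) =
            Real.exp (σf (i+1)) - Real.exp (σf (i+1)) * (1 + stp i)⁻¹ := by
          field_simp
          ring
        rw [e5]
        linarith
      have hHd'nn : 0 ≤ Hd H (τ' i) := hHdnn _ (hτ'_mem i)
      have hgap0 : 0 ≤ τ (i+1) - τ' i := by linarith [hτ'τ i]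
      have hGnn : 0 ≤ muSeq p A s₀ i ^ p * (2*s₀)^(-(p-1)) * stp i := by
        have h1 := Real.rpow_pos_of_pos (hμpos i) p
        have h2 := hstp_pos i
        positivity
      have hc1 : (τ (i+1) + 1) * (stp i / (1 + stp i)) *
          (muSeq p A s₀ i ^ p * (2*s₀)^(-(p-1)) * stp i) ≤
          (τ (i+1) - τ' i) * Hd H (τ' i) :=
        mul_le_mul hgap hstep1' hGnn hgap0
      have halg : muSeq p A s₀ (i+1) * (τ (i+1) + 1) = (τ (i+1) + 1) * (stp i / (1 + stp i)) *
          (muSeq p A s₀ i ^ p * (2*s₀)^(-(p-1)) * stp i) := by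
        rw [muSeq_succ, hstp]
        ring
      rw [halg]
      linarith
  -- growth of muSeq
  obtain ⟨dd, hdd⟩ : ∃ d : ℝ, d = Real.log ((2:ℝ)^(-(p-1))/16) + (2-p)*Real.log s₀ := ⟨_, rfl⟩
  have hlogrec : ∀ i : ℕ, p * Real.log (muSeq p A s₀ i) + dd - i * Real.log 4 ≤
      Real.log (muSeq p A s₀ (i+1)) := by
    intro i
    have hstpos : (0:ℝ) < s₀ * (2⁻¹:ℝ)^(i+2) := by positivity
    have hstle : s₀ * (2⁻¹:ℝ)^(i+2) ≤ s₀/4 := by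
      have := hstp_le i
      rw [hstp] at this
      exact this
    have h1s : (0:ℝ) < 1 + s₀ * (2⁻¹:ℝ)^(i+2) := by linarith
    have hFlb : ((2:ℝ)^(-(p-1))/16) * s₀^(2-p) * ((4:ℝ)⁻¹)^i ≤
        (2*s₀)^(-(p-1)) * (s₀ * (2⁻¹:ℝ)^(i+2))^2 / (1 + s₀ * (2⁻¹:ℝ)^(i+2)) := by
      have hnum : (0:ℝ) ≤ (2*s₀)^(-(p-1)) * (s₀ * (2⁻¹:ℝ)^(i+2))^2 := by positivity
      have hden : 1 + s₀ * (2⁻¹:ℝ)^(i+2) ≤ s₀ := by linarith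
      have hA1 : (2*s₀)^(-(p-1)) * (s₀ * (2⁻¹:ℝ)^(i+2))^2 / s₀ ≤
          (2*s₀)^(-(p-1)) * (s₀ * (2⁻¹:ℝ)^(i+2))^2 / (1 + s₀ * (2⁻¹:ℝ)^(i+2)) := by
        gcongr
      refine le_trans (le_of_eq ?_) hA1
      have e1 : ((2⁻¹:ℝ)^(i+2))^2 = ((4:ℝ)⁻¹)^i * 16⁻¹ := by
        rw [← pow_mul, show ((4:ℝ)⁻¹) = (2⁻¹:ℝ)^2 by norm_num, ← pow_mul,
          show (16:ℝ)⁻¹ = (2⁻¹:ℝ)^4 by norm_num, ← pow_add]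
        congr 1
        ring
      have e2 : s₀^(-(p-1)) * s₀^(2:ℕ) / s₀ = s₀^(2-p) := by
        rw [← Real.rpow_natCast s₀ 2, div_eq_mul_inv,
          show s₀⁻¹ = s₀^(-1:ℝ) from (Real.rpow_neg_one s₀).symm,
          ← Real.rpow_add hs₀pos, ← Real.rpow_add hs₀pos]
        congr 1
        push_cast
        ring
      rw [Real.mul_rpow (by norm_num : (0:ℝ) ≤ 2) hs₀pos.le, mul_pow, e1]
      rw [show (2:ℝ)^(-(p-1)) * s₀^(-(p-1)) * (s₀^2 * (((4:ℝ)⁻¹)^i * 16⁻¹)) / s₀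
        = ((2:ℝ)^(-(p-1))/16) * (s₀^(-(p-1)) * s₀^(2:ℕ) / s₀) * ((4:ℝ)⁻¹)^i by ring, e2]
    have hlhs_pos : (0:ℝ) < ((2:ℝ)^(-(p-1))/16) * s₀^(2-p) * ((4:ℝ)⁻¹)^i := by positivity
    have hloglb := Real.log_le_log hlhs_pos hFlb
    rw [Real.log_mul (by positivity) (by positivity), Real.log_mul (by positivity) (by positivity),
      Real.log_rpow hs₀pos, Real.log_pow, Real.log_inv] at hloglb
    have hXpos : (0:ℝ) < (2*s₀)^(-(p-1)) * (s₀ * (2⁻¹:ℝ)^(i+2))^2 / (1 + s₀ * (2⁻¹:ℝ)^(i+2)) := by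
      positivity
    have hrec : Real.log (muSeq p A s₀ (i+1)) = p * Real.log (muSeq p A s₀ i) +
        Real.log ((2*s₀)^(-(p-1)) * (s₀ * (2⁻¹:ℝ)^(i+2))^2 / (1 + s₀ * (2⁻¹:ℝ)^(i+2))) := by
      rw [muSeq_succ, Real.log_mul (Real.rpow_pos_of_pos (hμpos i) p).ne' hXpos.ne',
        Real.log_rpow (hμpos i)]
    rw [hrec, hdd]
    have hlog4 : Real.log ((4:ℝ)⁻¹) = -Real.log 4 := Real.log_inv 4
    nlinarith [hloglb]
  -- the shifted sequence y
  obtain ⟨y, hy⟩ : ∃ f : ℕ → ℝ, f = fun i : ℕ =>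
      Real.log (muSeq p A s₀ i) - (Real.log 4/(p-1)) * i - Real.log 4/(p-1)^2 + dd/(p-1) :=
    ⟨_, rfl⟩
  have hyrec : ∀ i, p * y i ≤ y (i+1) := by
    intro i
    have h := hlogrec i
    have hid : y (i+1) - p * y i = Real.log (muSeq p A s₀ (i+1)) -
        (p * Real.log (muSeq p A s₀ i) + dd - i * Real.log 4) := by
      rw [hy]
      simp only
      push_cast
      field_simp
      ring
    linarith
  have hy0 : 1 ≤ y 0 := by
    rw [hy]
    simp only [muSeq_zero, Nat.cast_zero, mul_zero, sub_zero]
    rw [Real.log_div (by positivity) (by norm_num : (2:ℝ) ≠ 0),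
      Real.log_mul hA.ne' hs₀pos.ne']
    rw [hdd, Real.log_div (by positivity) (by norm_num : (16:ℝ) ≠ 0),
      Real.log_rpow (by norm_num : (0:ℝ) < 2)]
    rw [Cp] at hgrow
    have hiden : Real.log A + Real.log s₀ - Real.log 2 - Real.log 4/(p-1)^2 +
        (-(p-1) * Real.log 2 - Real.log 16 + (2-p)*Real.log s₀)/(p-1)
        = Real.log A + Real.log s₀/(p-1) -
          (2*Real.log 2 + Real.log 16/(p-1) + Real.log 4/(p-1)^2) := by
      field_simp
      ring
    linarith [hiden, hgrow]
  have hylb : ∀ i, (p:ℝ)^i ≤ y i := by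
    intro i
    induction i with
    | zero => simpa using hy0
    | succ i ih =>
      have h1 := hyrec i
      have h2 : (p:ℝ)^(i+1) = p * p^i := by ring
      have h3 : p * p^i ≤ p * y i := by
        apply mul_le_mul_of_nonneg_left ih (by linarith)
      linarith
  have hxlb : ∀ i : ℕ, (p:ℝ)^i - dd/(p-1) ≤ Real.log (muSeq p A s₀ i) := by
    intro i
    have h1 := hylb i
    rw [hy] at h1
    simp only at h1
    have h2 : 0 ≤ (Real.log 4/(p-1)) * i :=
      mul_nonneg (div_nonneg (Real.log_nonneg (by norm_num)) hp1.le) (Nat.cast_nonneg i)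
    have h3 : 0 ≤ Real.log 4/(p-1)^2 :=
      div_nonneg (Real.log_nonneg (by norm_num)) (by positivity)
    linarith
  -- the contradiction
  have hbIcc : b ∈ Icc (0:ℝ) b := ⟨hb0, le_rfl⟩
  have hμleR : ∀ i, muSeq p A s₀ i ≤ H b / (b + 1) := by
    intro i
    have h1 : (0:ℝ) < τ i + 1 := by linarith [hτpos i]
    have h2 := Pmono (hτ_mem i) hbIcc (hτ_mem i).2
    simp only at h2
    have h3 : muSeq p A s₀ i ≤ H (τ i)/(τ i + 1) := (le_div_iff₀ h1).2 (IND i)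
    linarith
  have hRpos : 0 < H b / (b + 1) := lt_of_lt_of_le (hμpos 0) (hμleR 0)
  obtain ⟨i, hi⟩ := pow_unbounded_of_one_lt (Real.log (H b / (b+1)) + dd/(p-1)) hp
  have hlogR : Real.log (H b / (b+1)) < Real.log (muSeq p A s₀ i) := by
    linarith [hxlb i]
  have hcontr : H b / (b+1) < muSeq p A s₀ i := by
    have h1 := Real.exp_lt_exp.2 hlogR
    rwa [Real.exp_log hRpos, Real.exp_log (hμpos i)] at h1
  exact absurd (hμleR i) (not_le.2 hcontr)



theorem crit_ode_lemma (p T₀ : ℝ) (hp : 1 < p) (hT₀ : 0 < T₀) :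
    (∀ A : ℝ, 0 < A → ∃ M : ℝ, ∀ (H : ℝ → ℝ) (S : EReal),
      MemAcrit p T₀ A H S → S ≤ (M : EReal)) ∧
    (∃ A₀ > (0 : ℝ), ∃ C > (0 : ℝ), ∀ A : ℝ, 0 < A → A < A₀ →
      ∀ (H : ℝ → ℝ) (S : EReal), MemAcrit p T₀ A H S →
        S ≠ ⊤ ∧ Real.log S.toReal ≤ C * A ^ (-(p - 1))) := by
  have hp1 : (0:ℝ) < p - 1 := by linarith
  set c₀ : ℝ := max 2 (Real.log (T₀ + 1)) with hc₀
  set K : ℝ := Real.exp ((p-1) * (Cp p + 1)) with hK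
  have hKpos : 0 < K := Real.exp_pos _
  have hc₀2 : (2:ℝ) ≤ c₀ := le_max_left _ _
  have hc₀pos : (0:ℝ) < c₀ := by linarith
  -- the main reduction
  have main : ∀ A : ℝ, 0 < A → ∀ s₀ : ℝ, c₀ ≤ s₀ → K * A^(-(p-1)) ≤ s₀ →
      ∀ (H : ℝ → ℝ) (S : EReal), MemAcrit p T₀ A H S →
        S ≤ ((Real.exp (2 * s₀) : ℝ) : EReal) := by
    intro A hA s₀ h1 h2 H S hmem
    have hApow : 0 < A^(-(p-1)) := Real.rpow_pos_of_pos hA _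
    have hKA : 0 < K * A^(-(p-1)) := by positivity
    apply crit_key p T₀ A hp hT₀ hA s₀ (le_trans hc₀2 h1)
      (le_trans (le_max_right _ _) h1) ?_ H S hmem
    have hlog := Real.log_le_log hKA h2
    rw [Real.log_mul hKpos.ne' hApow.ne', hK, Real.log_exp,
      Real.log_rpow hA] at hlog
    have h3 : Cp p + 1 - Real.log A ≤ Real.log s₀ / (p-1) := by
      rw [le_div_iff₀ hp1]
      nlinarith [hlog]
    linarith
  constructor
  · intro A hA
    refine ⟨Real.exp (2 * max c₀ (K * A^(-(p-1)))), fun H S h => ?_⟩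
    exact main A hA _ (le_max_left _ _) (le_max_right _ _) H S h
  · -- choose A₀ so that K * A^{-(p-1)} ≥ c₀ for 0 < A < A₀
    refine ⟨min 1 ((K/c₀) ^ ((p-1)⁻¹)), lt_min one_pos (Real.rpow_pos_of_pos (by positivity) _),
      2*K, by positivity, ?_⟩
    intro A hA hAA₀ H S hmem
    have hApow : 0 < A^(p-1) := Real.rpow_pos_of_pos hA _
    have hcle : c₀ ≤ K * A^(-(p-1)) := by
      have hA1 : A ≤ (K/c₀) ^ ((p-1)⁻¹) := le_trans hAA₀.le (min_le_right _ _)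
      have h1 : A^(p-1) ≤ K/c₀ := by
        calc A^(p-1) ≤ ((K/c₀) ^ ((p-1)⁻¹))^(p-1) :=
              Real.rpow_le_rpow hA.le hA1 (by linarith)
          _ = K/c₀ := by
            rw [← Real.rpow_mul (by positivity), inv_mul_cancel₀ hp1.ne', Real.rpow_one]
      have h2 : A^(-(p-1)) = (A^(p-1))⁻¹ := by
        rw [← Real.rpow_neg_one (A^(p-1)), ← Real.rpow_mul hA.le]
        congr 1
        ring
      have h3 : A^(p-1) * c₀ ≤ K := by
        rw [le_div_iff₀ hc₀pos] at h1
        exact h1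
      rw [h2]
      calc c₀ = c₀ * A^(p-1) * (A^(p-1))⁻¹ := by field_simp
        _ ≤ K * (A^(p-1))⁻¹ := by
            apply mul_le_mul_of_nonneg_right _ (by positivity)
            nlinarith
    have hs := main A hA (K * A^(-(p-1))) hcle le_rfl H S hmem
    have hSneTop : S ≠ ⊤ := by
      intro htop
      rw [htop] at hs
      exact absurd hs (by simp)
    refine ⟨hSneTop, ?_⟩
    have hS0 := hmem.1
    have hSneBot : S ≠ ⊥ := by
      intro hbot
      rw [hbot] at hS0
      exact absurd hS0 (by simp)
    have htr : S.toReal ≤ Real.exp (2 * (K * A^(-(p-1)))) := by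
      have := EReal.toReal_le_toReal hs hSneBot (EReal.coe_ne_top _)
      simpa using this
    have hStoRpos : 0 < S.toReal := by
      have hex : ∃ s : ℝ, S = (s : EReal) := by
        induction S with
        | bot => exact absurd rfl hSneBot
        | coe s => exact ⟨s, rfl⟩
        | top => exact absurd rfl hSneTop
      obtain ⟨s, rfl⟩ := hex
      rw [EReal.toReal_coe]
      exact_mod_cast hS0
    have hlog2 : Real.log S.toReal ≤ 2 * (K * A^(-(p-1))) := by
      calc Real.log S.toReal ≤ Real.log (Real.exp (2 * (K * A^(-(p-1))))) :=
            Real.log_le_log hStoRpos htr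
        _ = 2 * (K * A^(-(p-1))) := Real.log_exp _
    calc Real.log S.toReal ≤ 2 * (K * A^(-(p-1))) := hlog2
      _ = 2*K * A^(-(p-1)) := by ring
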